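/- The discrete Lagrangian L(q,Q) = ⟨q,JQ⟩ Poisson-commutes with each f_i on the light-like cone: with the bracket {f,g}_Ω as above and c = 0, {f_i, L}_Ω = 0 identically for all (q,Q) ∈ ℝ^n × ℝ^n. -/

import Mathlib

open Finset

/-- Partial derivative in the `q`-slot (first factor), direction `i`. -/
noncomputable def pdq {n : ℕ} (f : (Fin n → ℝ) × (Fin n → ℝ) → ℝ)
    (i : Fin n) (x : (Fin n → ℝ) × (Fin n → ℝ)) : ℝ :=
  fderiv ℝ f x (Pi.single i 1, 0)

/-- Partial derivative in the `Q`-slot (second factor), direction `i`. -/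
noncomputable def pdQ {n : ℕ} (f : (Fin n → ℝ) × (Fin n → ℝ) → ℝ)
    (i : Fin n) (x : (Fin n → ℝ) × (Fin n → ℝ)) : ℝ :=
  fderiv ℝ f x (0, Pi.single i 1)

/-- The Poisson bracket of the symplectic form Ω = ∑ τ_i J_i dQ_i ∧ dq_i. -/
noncomputable def pbr {n : ℕ} (τ J : Fin n → ℝ)
    (f g : (Fin n → ℝ) × (Fin n → ℝ) → ℝ)
    (x : (Fin n → ℝ) × (Fin n → ℝ)) : ℝ :=
  - ∑ i, pdQ f i x * (τ i * (J i)⁻¹) * pdq g i x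
  + ∑ i, pdq f i x * (τ i * (J i)⁻¹) * pdQ g i x

/-- The integrals f_i of the light-like (c = 0) discrete Neumann system. -/
noncomputable def fint0 {n : ℕ} (τ J : Fin n → ℝ) (i : Fin n)
    (x : (Fin n → ℝ) × (Fin n → ℝ)) : ℝ :=
  ∑ j ∈ Finset.univ.erase i,
    τ i * τ j * (J j * x.2 j * x.1 i - x.1 j * J i * x.2 i)^2 / ((J i)^2 - (J j)^2)

lemma hc1 {n : ℕ} (j : Fin n) (x : (Fin n → ℝ) × (Fin n → ℝ)) :
    HasFDerivAt (fun p : (Fin n→ℝ)×(Fin n→ℝ) => p.1 j)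
      ((ContinuousLinearMap.proj j).comp (ContinuousLinearMap.fst ℝ (Fin n→ℝ) (Fin n→ℝ))) x :=
  (hasFDerivAt_apply (𝕜 := ℝ) j x.1).comp x hasFDerivAt_fst

lemma hc2 {n : ℕ} (j : Fin n) (x : (Fin n → ℝ) × (Fin n → ℝ)) :
    HasFDerivAt (fun p : (Fin n→ℝ)×(Fin n→ℝ) => p.2 j)
      ((ContinuousLinearMap.proj j).comp (ContinuousLinearMap.snd ℝ (Fin n→ℝ) (Fin n→ℝ))) x :=
  (hasFDerivAt_apply (𝕜 := ℝ) j x.2).comp x hasFDerivAt_snd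

lemma fderiv_L {n : ℕ} (τ J : Fin n → ℝ) (x v : (Fin n → ℝ) × (Fin n → ℝ)) :
    fderiv ℝ (fun p : (Fin n → ℝ) × (Fin n → ℝ) => ∑ j, τ j * J j * p.1 j * p.2 j) x v
      = ∑ j, τ j * J j * (v.1 j * x.2 j + x.1 j * v.2 j) := by
  have H := HasFDerivAt.fun_sum (fun j (_ : j ∈ (Finset.univ : Finset (Fin n))) =>
    (((hc1 j x).const_mul (τ j * J j)).fun_mul (hc2 j x)))
  rw [H.fderiv]
  simp only [ContinuousLinearMap.sum_apply, ContinuousLinearMap.add_apply,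
    ContinuousLinearMap.smul_apply, ContinuousLinearMap.comp_apply,
    ContinuousLinearMap.coe_fst', ContinuousLinearMap.coe_snd',
    ContinuousLinearMap.proj_apply, smul_eq_mul]
  refine Finset.sum_congr rfl fun j _ => by ring

lemma fderiv_fint0 {n : ℕ} (τ J : Fin n → ℝ) (i : Fin n) (x v : (Fin n → ℝ) × (Fin n → ℝ)) :
    fderiv ℝ (fint0 τ J i) x v
      = ∑ j ∈ Finset.univ.erase i, τ i * τ j *
          (2 * (J j * x.2 j * x.1 i - x.1 j * J i * x.2 i) *
            ((J j * v.2 j * x.1 i + J j * x.2 j * v.1 i)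
              - (v.1 j * J i * x.2 i + x.1 j * J i * v.2 i))) / ((J i)^2 - (J j)^2) := by
  have hA : ∀ j, HasFDerivAt
      (fun p : (Fin n→ℝ)×(Fin n→ℝ) => J j * p.2 j * p.1 i - p.1 j * J i * p.2 i) _ x :=
    fun j => ((((hc2 j x).const_mul (J j)).fun_mul (hc1 i x)).sub
        (((hc1 j x).mul_const (J i)).fun_mul (hc2 i x)))
  have H := HasFDerivAt.fun_sum (fun j (_ : j ∈ Finset.univ.erase i) =>
    ((((hA j).fun_mul (hA j)).const_mul (τ i * τ j)).const_mul (((J i)^2 - (J j)^2)⁻¹)))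
  rw [show fint0 τ J i = fun p => ∑ j ∈ Finset.univ.erase i,
      ((J i)^2 - (J j)^2)⁻¹ * (τ i * τ j * ((J j * p.2 j * p.1 i - p.1 j * J i * p.2 i)
        * (J j * p.2 j * p.1 i - p.1 j * J i * p.2 i))) from by
    funext p
    refine Finset.sum_congr rfl fun j _ => by rw [pow_two]; ring, H.fderiv]
  simp only [ContinuousLinearMap.sum_apply, ContinuousLinearMap.add_apply,
    ContinuousLinearMap.sub_apply, ContinuousLinearMap.smul_apply,
    ContinuousLinearMap.comp_apply, ContinuousLinearMap.coe_fst',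
    ContinuousLinearMap.coe_snd', ContinuousLinearMap.proj_apply, smul_eq_mul,
    ContinuousLinearMap.coe_smul', Pi.smul_apply]
  refine Finset.sum_congr rfl fun j _ => by ring

lemma single_sum {n : ℕ} (g : Fin n → ℝ) (m : Fin n) :
    ∑ k, g k * (Pi.single k 1 : Fin n → ℝ) m = g m := by
  simp [Pi.single_apply, mul_ite]

theorem stmt13 (n : ℕ) (τ J : Fin n → ℝ)
    (hτ : ∀ i, τ i = 1 ∨ τ i = -1) (hJ0 : ∀ i, J i ≠ 0)
    (hJ : ∀ i j, i ≠ j → (J i)^2 ≠ (J j)^2)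
    (L : (Fin n → ℝ) × (Fin n → ℝ) → ℝ)
    (hL : ∀ x, L x = ∑ i, τ i * J i * x.1 i * x.2 i) :
    ∀ (i : Fin n) (x : (Fin n → ℝ) × (Fin n → ℝ)),
      pbr τ J (fint0 τ J i) L x = 0 := by
  intro i x
  have hL' : L = fun p : (Fin n → ℝ) × (Fin n → ℝ) => ∑ j, τ j * J j * p.1 j * p.2 j :=
    funext hL
  have hτJ : ∀ k, τ k * (J k)⁻¹ * (τ k * J k) = 1 := fun k => by
    rcases hτ k with h | h <;> rw [h] <;> field_simp [hJ0 k]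
  have hpdqL : ∀ k, pdq L k x = τ k * J k * x.2 k := by
    intro k
    rw [pdq, hL', fderiv_L]
    simp [Pi.single_apply, mul_ite, ite_mul]
  have hpdQL : ∀ k, pdQ L k x = τ k * J k * x.1 k := by
    intro k
    rw [pdQ, hL', fderiv_L]
    simp [Pi.single_apply, mul_ite, ite_mul, mul_comm]
  have hpdqf : ∀ k, pdq (fint0 τ J i) k x
      = ∑ j ∈ Finset.univ.erase i, τ i * τ j *
          (2 * (J j * x.2 j * x.1 i - x.1 j * J i * x.2 i) *
            (J j * x.2 j * (Pi.single k 1 : Fin n → ℝ) i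
              - (Pi.single k 1 : Fin n → ℝ) j * J i * x.2 i)) / ((J i)^2 - (J j)^2) := by
    intro k
    rw [pdq, fderiv_fint0]
    refine Finset.sum_congr rfl fun j _ => by simp
  have hpdQf : ∀ k, pdQ (fint0 τ J i) k x
      = ∑ j ∈ Finset.univ.erase i, τ i * τ j *
          (2 * (J j * x.2 j * x.1 i - x.1 j * J i * x.2 i) *
            (J j * (Pi.single k 1 : Fin n → ℝ) j * x.1 i
              - x.1 j * J i * (Pi.single k 1 : Fin n → ℝ) i)) / ((J i)^2 - (J j)^2) := by
    intro k
    rw [pdQ, fderiv_fint0]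
    refine Finset.sum_congr rfl fun j _ => by simp
  rw [pbr, neg_add_eq_sub, ← Finset.sum_sub_distrib]
  have step1 : ∀ k : Fin n,
      pdq (fint0 τ J i) k x * (τ k * (J k)⁻¹) * pdQ L k x
        - pdQ (fint0 τ J i) k x * (τ k * (J k)⁻¹) * pdq L k x
      = ∑ j ∈ Finset.univ.erase i,
          ((τ i * τ j * (2 * (J j * x.2 j * x.1 i - x.1 j * J i * x.2 i))
              / ((J i)^2 - (J j)^2)
            * (J j * x.2 j * x.1 k + x.1 j * J i * x.2 k))
              * (Pi.single k 1 : Fin n → ℝ) i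
          - (τ i * τ j * (2 * (J j * x.2 j * x.1 i - x.1 j * J i * x.2 i))
              / ((J i)^2 - (J j)^2)
            * (J i * x.2 i * x.1 k + J j * x.1 i * x.2 k))
              * (Pi.single k 1 : Fin n → ℝ) j) := by
    intro k
    rw [hpdqf k, hpdQf k, hpdqL k, hpdQL k, Finset.sum_mul, Finset.sum_mul,
      Finset.sum_mul, Finset.sum_mul, ← Finset.sum_sub_distrib]
    have e : ∀ a b u v : ℝ,
        a * (τ k * (J k)⁻¹) * (τ k * J k * u) - b * (τ k * (J k)⁻¹) * (τ k * J k * v)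
          = a * u - b * v := fun a b u v => by
      linear_combination (a * u - b * v) * hτJ k
    refine Finset.sum_congr rfl fun j _ => ?_
    rw [e]
    ring
  rw [Finset.sum_congr rfl fun k _ => step1 k, Finset.sum_comm]
  refine Finset.sum_eq_zero fun j hj => ?_
  rw [Finset.sum_sub_distrib,
    single_sum (fun k => τ i * τ j * (2 * (J j * x.2 j * x.1 i - x.1 j * J i * x.2 i))
      / ((J i)^2 - (J j)^2) * (J j * x.2 j * x.1 k + x.1 j * J i * x.2 k)) i,
    single_sum (fun k => τ i * τ j * (2 * (J j * x.2 j * x.1 i - x.1 j * J i * x.2 i))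
      / ((J i)^2 - (J j)^2) * (J i * x.2 i * x.1 k + J j * x.1 i * x.2 k)) j]
  ring
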